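/- Let Cay(G,S) be a Cayley graph and let (α_n)_{n ∈ ℕ₀} be nonnegative real numbers. Then for all i, j ∈ I(G), (1/|S_i(e)|) · Σ_{v ∈ S_i(e)} Σ_{w ∈ G, vw ∈ S_j(e)} α_{|w|} = Σ_{k ∈ I(G)} p_{i,k}^j · α_k · |S_k(e)|, where all sums are finitely supported. (When (α_n) is a distribution on G, i.e. Σ_{n ∈ I(G)} α_n |S_n(e)| = 1 with α_n > 0, this says ℙ(Z_2 = j | Z_1 = i) = Σ_k p_{i,k}^j α_k |S_k(e)| for the random walk whose steps are i.i.d. with law ℙ(X = v) = α_{|v|} and Z_n = |X_1 ⋯ X_n|.) -/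

import Mathlib

open scoped BigOperators

noncomputable section

/-- The Cayley graph of a group `G` with connection set `S`. -/
def cayley {G : Type*} [Group G] (S : Set G) : SimpleGraph G :=
  SimpleGraph.fromRel (fun v w => v⁻¹ * w ∈ S)

section lemmas
variable {G : Type*} [Group G] {S : Set G}

theorem cayley_adj {v w : G} : (cayley S).Adj v w ↔ v ≠ w ∧ (v⁻¹ * w ∈ S ∨ w⁻¹ * v ∈ S) := by
  simp [cayley, SimpleGraph.fromRel_adj]

/-- left multiplication as a graph hom -/
def cayleyHom (a : G) : cayley S →g cayley S where
  toFun := (a * ·)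
  map_rel' := by
    intro v w h
    rw [cayley_adj] at h ⊢
    refine ⟨by simpa using h.1, ?_⟩
    simpa [mul_assoc] using h.2

@[simp] theorem cayleyHom_apply (a x : G) : cayleyHom (S := S) a x = a * x := rfl

theorem cayley_dist_mul_left (a v w : G) :
    (cayley S).dist (a * v) (a * w) = (cayley S).dist v w := by
  have key : ∀ (b x y : G), (cayley S).dist (b * x) (b * y) ≤ (cayley S).dist x y := by
    intro b x y
    rcases eq_or_ne ((cayley S).dist x y) 0 with h | h
    · rcases SimpleGraph.dist_eq_zero_iff_eq_or_not_reachable.mp h with rfl | h2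
      · simp [SimpleGraph.dist_self]
      · rw [h, Nat.le_zero]
        apply SimpleGraph.dist_eq_zero_of_not_reachable
        intro hr
        have h3 := hr.map (cayleyHom b⁻¹)
        simp only [cayleyHom_apply, inv_mul_cancel_left] at h3
        exact h2 h3
    · obtain ⟨p, hp⟩ := SimpleGraph.exists_walk_of_dist_ne_zero h
      calc (cayley S).dist (b * x) (b * y) ≤ (p.map (cayleyHom b)).length :=
            SimpleGraph.dist_le _
        _ = (cayley S).dist x y := by rw [SimpleGraph.Walk.length_map, hp]
  refine le_antisymm (key a v w) ?_
  have := key a⁻¹ (a * v) (a * w)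
  simpa [mul_assoc] using this

end lemmas

section lemmas2
variable {G : Type*} [Group G] {S : Set G}
  (hfin : S.Finite) (hsym : ∀ s ∈ S, s⁻¹ ∈ S) (hid : (1 : G) ∉ S)
  (hgen : Subgroup.closure S = ⊤)

theorem cayley_adj_of (hsym : ∀ s ∈ S, s⁻¹ ∈ S) {v w : G} (h : (cayley S).Adj v w) :
    v⁻¹ * w ∈ S := by
  rw [cayley_adj] at h
  rcases h.2 with h2 | h2
  · exact h2
  · simpa using hsym _ h2

include hsym hid hgen in
omit hfin hsym in
theorem cayley_preconnected : (cayley S).Preconnected := by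
  have key : ∀ g : G, (cayley S).Reachable 1 g := by
    have hH : ∀ g ∈ Subgroup.closure S, (cayley S).Reachable 1 g := by
      intro g hg
      induction hg using Subgroup.closure_induction with
      | mem s hs =>
        refine SimpleGraph.Adj.reachable ?_
        rw [cayley_adj]
        exact ⟨fun h => hid (h ▸ hs), Or.inl (by simpa using hs)⟩
      | one => exact SimpleGraph.Reachable.refl 1
      | mul x y hx hy ihx ihy =>
        refine ihx.trans ?_
        have := ihy.map (cayleyHom x)
        simpa using this
      | inv x hx ihx =>
        have := ihx.map (cayleyHom x⁻¹)
        simp only [cayleyHom_apply, mul_one, inv_mul_cancel] at this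
        exact this.symm
    intro g
    exact hH g (hgen ▸ Subgroup.mem_top g)
  intro u v
  exact (key u).symm.trans (key v)

omit hfin hsym in
include hid hgen in
theorem cayley_connected : (cayley S).Connected :=
  haveI : Nonempty G := ⟨1⟩
  SimpleGraph.Connected.mk (cayley_preconnected hid hgen)

end lemmas2

/-- The sphere of radius `n` around `v` in the graph `Γ`. -/
def gsphere {V : Type*} (Γ : SimpleGraph V) (v : V) (n : ℕ) : Set V :=
  {w | Γ.dist v w = n}

/-- `I(Γ, v₀)`: the set of distances realized from the base point `v₀`. -/
def idx {V : Type*} (Γ : SimpleGraph V) (v0 : V) : Set ℕ :=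
  {n | (gsphere Γ v0 n).Nonempty}

section lemmas3
variable {G : Type*} [Group G] {S : Set G}
  (hfin : S.Finite) (hsym : ∀ s ∈ S, s⁻¹ ∈ S) (hid : (1 : G) ∉ S)
  (hgen : Subgroup.closure S = ⊤)

theorem mem_gsphere {V : Type*} {Γ : SimpleGraph V} {v w : V} {n : ℕ} :
    w ∈ gsphere Γ v n ↔ Γ.dist v w = n := Iff.rfl

omit hfin hsym hid hgen in
theorem gsphere_mul_left (a v : G) (n : ℕ) :
    gsphere (cayley S) (a * v) n = (a * ·) '' gsphere (cayley S) v n := by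
  ext w
  simp only [mem_gsphere, Set.mem_image]
  constructor
  · intro h
    refine ⟨a⁻¹ * w, ?_, by simp⟩
    rw [← cayley_dist_mul_left a, mul_inv_cancel_left]
    exact h
  · rintro ⟨u, hu, rfl⟩
    rw [cayley_dist_mul_left]
    exact hu

include hfin hsym hid hgen in
theorem gsphere_one_finite (n : ℕ) : (gsphere (cayley S) (1 : G) n).Finite := by
  induction n with
  | zero =>
    apply Set.Finite.subset (Set.finite_singleton (1 : G))
    intro w hw
    rw [mem_gsphere] at hw
    have := ((cayley_connected hid hgen).dist_eq_zero_iff).mp hw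
    simp [this.symm]
  | succ n ih =>
    have hbig : (⋃ s ∈ S, (· * s) '' gsphere (cayley S) 1 n).Finite :=
      hfin.biUnion (fun s _ => ih.image _)
    apply hbig.subset
    intro w hw
    rw [mem_gsphere] at hw
    have hne : (cayley S).dist w 1 ≠ 0 := by rw [SimpleGraph.dist_comm]; omega
    obtain ⟨p, hp⟩ := SimpleGraph.exists_walk_of_dist_ne_zero hne
    rw [SimpleGraph.dist_comm] at hp
    cases p with
    | nil => simp at hw
    | @cons _ u _ h q =>
      have hq : (cayley S).dist 1 u ≤ n := by
        have := SimpleGraph.dist_le q.reverse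
        simp only [SimpleGraph.Walk.length_reverse] at this
        simp only [SimpleGraph.Walk.length_cons] at hp
        omega
      have huw : (cayley S).dist 1 w ≤ (cayley S).dist 1 u + 1 := by
        have h1 : (cayley S).dist u w ≤ 1 := by
          have := SimpleGraph.dist_le (h.symm.toWalk)
          simpa using this
        calc (cayley S).dist 1 w ≤ (cayley S).dist 1 u + (cayley S).dist u w :=
              SimpleGraph.Connected.dist_triangle (cayley_connected hid hgen)
          _ ≤ (cayley S).dist 1 u + 1 := by omega
      have hdu : (cayley S).dist 1 u = n := by omega
      have hs : u⁻¹ * w ∈ S := by simpa using hsym _ (cayley_adj_of hsym h)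
      refine Set.mem_biUnion hs ⟨u, hdu, by simp⟩

end lemmas3

section lemmas4
variable {G : Type*} [Group G] {S : Set G}
  (hfin : S.Finite) (hsym : ∀ s ∈ S, s⁻¹ ∈ S) (hid : (1 : G) ∉ S)
  (hgen : Subgroup.closure S = ⊤)

omit hfin hsym hid hgen in
theorem gsphere_eq_image (v : G) (n : ℕ) :
    gsphere (cayley S) v n = (v * ·) '' gsphere (cayley S) (1 : G) n := by
  simpa using gsphere_mul_left v 1 n

include hfin hsym hid hgen in
theorem gsphere_finite (v : G) (n : ℕ) : (gsphere (cayley S) v n).Finite := by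
  rw [gsphere_eq_image]
  exact (gsphere_one_finite hfin hsym hid hgen n).image _

omit hfin hsym hid hgen in
theorem ncard_gsphere (v : G) (n : ℕ) :
    (gsphere (cayley S) v n).ncard = (gsphere (cayley S) (1 : G) n).ncard := by
  rw [gsphere_eq_image, Set.ncard_image_of_injective _ (mul_right_injective v)]

omit hfin hsym hid hgen in
theorem ncard_inter_gsphere (v : G) (k j : ℕ) :
    (gsphere (cayley S) v k ∩ gsphere (cayley S) (1 : G) j).ncard
      = (gsphere (cayley S) v⁻¹ j ∩ gsphere (cayley S) (1 : G) k).ncard := by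
  have h1 : gsphere (cayley S) (1 : G) j = (v * ·) '' gsphere (cayley S) v⁻¹ j := by
    rw [gsphere_eq_image (S := S) v⁻¹ j, ← Set.image_comp]
    ext w
    simp [Function.comp]
  rw [gsphere_eq_image v k, h1, ← Set.image_inter (mul_right_injective v),
    Set.ncard_image_of_injective _ (mul_right_injective v), Set.inter_comm]

omit hfin hsym hid hgen in
theorem dist_one_inv (v : G) :
    (cayley S).dist 1 v⁻¹ = (cayley S).dist 1 v := by
  rw [← cayley_dist_mul_left v 1 v⁻¹]
  simp [SimpleGraph.dist_comm]

omit hfin hsym hid hgen in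
theorem inner_set_eq (v : G) (j : ℕ) :
    {w : G | v * w ∈ gsphere (cayley S) (1 : G) j} = gsphere (cayley S) v⁻¹ j := by
  ext w
  simp only [Set.mem_setOf_eq, mem_gsphere]
  rw [← cayley_dist_mul_left v⁻¹ 1 (v * w), mul_one, inv_mul_cancel_left]

end lemmas4

/-- The structure constants `p_{i,j}^k` of the (pre-)hypergroup derived from `(Γ, v₀)`. -/
noncomputable def structConst {V : Type*} (Γ : SimpleGraph V) (v0 : V) (i j k : ℕ) : ℚ :=
  (1 / ((gsphere Γ v0 i).ncard : ℚ)) *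
    ∑ᶠ v ∈ gsphere Γ v0 i,
      ((gsphere Γ v j ∩ gsphere Γ v0 k).ncard : ℚ) / ((gsphere Γ v j).ncard : ℚ)

/-- for a Cayley graph and nonnegative reals `(α_n)`,
`(1/|S_i(e)|) Σ_{v ∈ S_i(e)} Σ_{w : vw ∈ S_j(e)} α_{|w|} = Σ_{k ∈ I(G)} p_{i,k}^j α_k |S_k(e)|`. -/
theorem cayley_two_step_transition {G : Type*} [Group G] (S : Set G)
    (hfin : S.Finite) (hsym : ∀ s ∈ S, s⁻¹ ∈ S) (hid : (1 : G) ∉ S)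
    (hgen : Subgroup.closure S = ⊤)
    (α : ℕ → ℝ) (hα : ∀ n, 0 ≤ α n)
    (i j : ℕ) (hi : i ∈ idx (cayley S) (1 : G)) (hj : j ∈ idx (cayley S) (1 : G)) :
    (1 / ((gsphere (cayley S) (1 : G) i).ncard : ℝ)) *
        ∑ᶠ v ∈ gsphere (cayley S) (1 : G) i,
          ∑ᶠ w ∈ {w : G | v * w ∈ gsphere (cayley S) (1 : G) j}, α ((cayley S).dist 1 w)
      = ∑ᶠ k ∈ idx (cayley S) (1 : G),
          (structConst (cayley S) (1 : G) i k j : ℝ) * α k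
            * ((gsphere (cayley S) (1 : G) k).ncard : ℝ) := by
  classical
  have hconn := cayley_connected hid hgen
  have hFin : ∀ (v : G) (n : ℕ), (gsphere (cayley S) v n).Finite :=
    gsphere_finite hfin hsym hid hgen
  set Γ := cayley S with hΓ
  set Ti : Finset G := (hFin 1 i).toFinset with hTi
  set K : Finset ℕ := Finset.range (i + j + 1) with hK
  set c : G → ℕ → ℕ := fun v k => (gsphere Γ v⁻¹ j ∩ gsphere Γ 1 k).ncard with hc
  set N : ℝ := ((gsphere Γ (1 : G) i).ncard : ℝ) with hN
  set g : ℕ → ℝ := fun k =>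
    (structConst Γ 1 i k j : ℝ) * α k * ((gsphere Γ 1 k).ncard : ℝ) with hg
  -- inner sum computation
  have inner : ∀ v ∈ gsphere Γ (1 : G) i,
      (∑ᶠ w ∈ {w : G | v * w ∈ gsphere Γ (1 : G) j}, α (Γ.dist 1 w))
        = ∑ k ∈ K, α k * (c v k : ℝ) := by
    intro v hv
    have hvi : Γ.dist 1 v = i := hv
    rw [inner_set_eq, finsum_mem_eq_finite_toFinset_sum _ (hFin v⁻¹ j)]
    set T : Finset G := (hFin v⁻¹ j).toFinset with hT
    have hmap : ∀ w ∈ T, Γ.dist 1 w ∈ K := by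
      intro w hw
      rw [hT, Set.Finite.mem_toFinset] at hw
      have hwj : Γ.dist v⁻¹ w = j := hw
      have h1 : Γ.dist 1 w ≤ Γ.dist 1 v⁻¹ + Γ.dist v⁻¹ w := hconn.dist_triangle
      rw [dist_one_inv, hvi, hwj] at h1
      simp only [hK, Finset.mem_range]
      omega
    rw [← Finset.sum_fiberwise_of_maps_to hmap (fun w => α (Γ.dist 1 w))]
    refine Finset.sum_congr rfl (fun k _ => ?_)
    have hconst : ∑ w ∈ T.filter (fun w => Γ.dist 1 w = k), α (Γ.dist 1 w)
        = (T.filter (fun w => Γ.dist 1 w = k)).card • α k := by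
      rw [← Finset.sum_const]
      exact Finset.sum_congr rfl (fun w hw => by rw [(Finset.mem_filter.mp hw).2])
    rw [hconst, nsmul_eq_mul]
    have hset : ((T.filter (fun w => Γ.dist 1 w = k)) : Set G)
        = gsphere Γ v⁻¹ j ∩ gsphere Γ 1 k := by
      ext w
      simp only [Finset.coe_filter, Set.mem_setOf_eq, hT, Set.Finite.mem_toFinset,
        Set.mem_inter_iff, mem_gsphere]
    have hcard : (T.filter (fun w => Γ.dist 1 w = k)).card = c v k := by
      simp only [hc]
      rw [← hset, Set.ncard_coe_finset]
    rw [hcard, mul_comm]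
  -- both sides equal the middle expression
  have LHS_eq : (1 / N) *
        (∑ᶠ v ∈ gsphere Γ (1 : G) i,
          ∑ᶠ w ∈ {w : G | v * w ∈ gsphere Γ (1 : G) j}, α (Γ.dist 1 w))
      = ∑ k ∈ K, (1 / N) * α k * ∑ v ∈ Ti, (c v k : ℝ) := by
    rw [finsum_mem_eq_finite_toFinset_sum _ (hFin 1 i)]
    rw [Finset.sum_congr rfl (fun v hv => inner v ((Set.Finite.mem_toFinset _).mp hv))]
    rw [Finset.sum_comm, Finset.mul_sum]
    refine Finset.sum_congr rfl (fun k _ => ?_)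
    rw [← Finset.mul_sum, mul_assoc]
  rw [LHS_eq]
  -- support of g is within K
  have hsupp : idx Γ 1 ∩ Function.support g
      = ↑(K.filter (· ∈ idx Γ 1)) ∩ Function.support g := by
    ext k
    simp only [Set.mem_inter_iff, Finset.coe_filter, Set.mem_setOf_eq, hK, Finset.mem_range,
      Function.mem_support]
    constructor
    · rintro ⟨hk, hgk⟩
      refine ⟨⟨?_, hk⟩, hgk⟩
      have hsc : (structConst Γ 1 i k j : ℚ) ≠ 0 := by
        intro h0
        apply hgk
        rw [hg]
        simp [h0]
      rw [structConst, finsum_mem_eq_finite_toFinset_sum _ (hFin 1 i)] at hsc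
      have hsum : ∑ v ∈ (hFin 1 i).toFinset,
          ((gsphere Γ v k ∩ gsphere Γ 1 j).ncard : ℚ) / ((gsphere Γ v k).ncard : ℚ) ≠ 0 := by
        intro h0
        rw [h0, mul_zero] at hsc
        exact hsc rfl
      obtain ⟨v, hvT, hv0⟩ := Finset.exists_ne_zero_of_sum_ne_zero hsum
      have hnum : (gsphere Γ v k ∩ gsphere Γ 1 j).ncard ≠ 0 := by
        intro h0
        rw [h0] at hv0
        simp at hv0
      obtain ⟨w, hwk, hwj⟩ := Set.nonempty_of_ncard_ne_zero hnum
      have hvi : Γ.dist 1 v = i := (Set.Finite.mem_toFinset (hFin 1 i)).mp hvT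
      have hwk' : Γ.dist v w = k := hwk
      have hwj' : Γ.dist 1 w = j := hwj
      have htri : Γ.dist v w ≤ Γ.dist v 1 + Γ.dist 1 w := hconn.dist_triangle
      rw [hwk', hwj', show Γ.dist v 1 = Γ.dist 1 v from SimpleGraph.dist_comm, hvi] at htri
      omega
    · rintro ⟨⟨_, hk⟩, hgk⟩
      exact ⟨hk, hgk⟩
  rw [finsum_mem_eq_sum_of_inter_support_eq g hsupp, Finset.sum_filter]
  -- termwise comparison
  refine Finset.sum_congr rfl (fun k _ => ?_)
  by_cases hk : k ∈ idx Γ 1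
  · rw [if_pos hk]
    simp only [hg]
    have hnk : ((gsphere Γ (1 : G) k).ncard : ℝ) ≠ 0 := by
      have := (Set.ncard_pos (hFin 1 k)).mpr hk
      positivity
    have hsc : (structConst Γ 1 i k j : ℚ)
        = (1 / ((gsphere Γ (1 : G) i).ncard : ℚ)) *
          ∑ v ∈ Ti, (c v k : ℚ) / ((gsphere Γ (1 : G) k).ncard : ℚ) := by
      rw [structConst, finsum_mem_eq_finite_toFinset_sum _ (hFin 1 i)]
      congr 1
      refine Finset.sum_congr rfl (fun v _ => ?_)
      simp only [hc]
      rw [ncard_inter_gsphere, ncard_gsphere]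
    rw [hsc]
    push_cast
    rw [← Finset.sum_div, ← hN]
    have key : ∀ (x y z n : ℝ), n ≠ 0 → 1 / y * (x / n) * z * n = 1 / y * z * x := by
      intro x y z n hn
      calc 1 / y * (x / n) * z * n = 1 / y * z * (x / n * n) := by ring
        _ = 1 / y * z * x := by rw [div_mul_cancel₀ x hn]
    rw [key _ _ _ _ hnk]
  · rw [if_neg hk]
    have hempty : gsphere Γ (1 : G) k = ∅ := Set.not_nonempty_iff_eq_empty.mp hk
    have : ∀ v, c v k = 0 := by
      intro v
      simp only [hc]
      simp [hempty]
    simp [this]
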